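/- Let X be a topological space and A a point-separating subalgebra of continuous real-valued functions on X, closed under composition with smooth functions (or at least containing inverses of nowhere-vanishing elements), and suppose A contains a proper function f : X → ℝ. Then every ℝ-algebra character χ : A → ℝ is evaluation at some point of X. -/

import Mathlib

set_option synthInstance.maxHeartbeats 800000 in
set_option maxHeartbeats 1600000 in
/-- Let `X` be Hausdorff and `A` a point-separating subalgebra of `C(X, ℝ)` in which
every nowhere-vanishing element is invertible and which contains a proper function.
Then every ℝ-algebra character of `A` is evaluation at a point of `X`. -/
theorem character_is_evaluation
    {X : Type*} [TopologicalSpace X] [T2Space X] (A : Subalgebra ℝ C(X, ℝ))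
    (hsep : ∀ x y : X, x ≠ y → ∃ f ∈ A, f x ≠ f y)
    (hinv : ∀ g ∈ A, (∀ x : X, g x ≠ 0) → ∃ h ∈ A, g * h = 1)
    (hproper : ∃ f ∈ A, ∀ K : Set ℝ, IsCompact K → IsCompact (⇑f ⁻¹' K))
    (χ : A →ₐ[ℝ] ℝ) : ∃ x : X, ∀ g : A, χ g = (g : C(X, ℝ)) x := by
  obtain ⟨f, hfA, hf⟩ := hproper
  by_contra hcon
  push_neg at hcon
  choose g hg using hcon
  set fA : A := ⟨f, hfA⟩ with hfAdef
  set c : ℝ := χ fA with hc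
  -- for each x, a nonneg element of A vanishing under χ but positive at x
  set p : X → A := fun x => (g x - algebraMap ℝ A (χ (g x)))^2 with hp
  have hpχ : ∀ x, χ (p x) = 0 := by
    intro x
    simp [hp, map_pow, map_sub]
  have hpval : ∀ x y : X, ((p x : C(X, ℝ)) y) = (((g x : C(X, ℝ)) y) - χ (g x))^2 := by
    intro x y
    simp [hp]
  have hppos : ∀ x, (0:ℝ) < (p x : C(X, ℝ)) x := by
    intro x
    rw [hpval]
    have hne : ((g x : C(X, ℝ)) x - χ (g x)) ≠ 0 := sub_ne_zero.2 (hg x).symm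
    positivity
  have hpnn : ∀ x y, (0:ℝ) ≤ (p x : C(X, ℝ)) y := by
    intro x y; rw [hpval]; positivity
  -- compact set
  have hK : IsCompact (⇑f ⁻¹' {c}) := hf _ isCompact_singleton
  -- open cover
  have hcover : (⇑f ⁻¹' {c}) ⊆ ⋃ x : X, {y | (0:ℝ) < (p x : C(X, ℝ)) y} := by
    intro y _
    exact Set.mem_iUnion.2 ⟨y, hppos y⟩
  have hopen : ∀ x : X, IsOpen {y | (0:ℝ) < (p x : C(X, ℝ)) y} := by
    intro x
    exact isOpen_lt continuous_const (p x : C(X, ℝ)).continuous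
  obtain ⟨t, ht⟩ := hK.elim_finite_subcover _ hopen hcover
  -- the element G
  set G : A := (fA - algebraMap ℝ A c)^2 + ∑ x ∈ t, p x with hG
  have hGχ : χ G = 0 := by
    simp [hG, map_pow, map_sub, hpχ, hc]
  have hGval : ∀ y : X, (G : C(X, ℝ)) y = (f y - c)^2 + ∑ x ∈ t, (p x : C(X, ℝ)) y := by
    intro y
    simp [hG, hfAdef]
  have hGpos : ∀ y : X, (G : C(X, ℝ)) y ≠ 0 := by
    intro y
    rw [hGval]
    by_cases hy : y ∈ ⇑f ⁻¹' {c}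
    · obtain ⟨x, hx, hxy⟩ := Set.mem_iUnion₂.1 (ht hy)
      have h1 : (0:ℝ) < ∑ x ∈ t, (p x : C(X, ℝ)) y :=
        Finset.sum_pos' (fun i _ => hpnn i y) ⟨x, hx, hxy⟩
      have h2 : (0:ℝ) ≤ (f y - c)^2 := sq_nonneg _
      linarith
    · have h1 : f y ≠ c := by simpa using hy
      have hne : f y - c ≠ 0 := sub_ne_zero.2 h1
      have h2 : (0:ℝ) < (f y - c)^2 := by positivity
      have h3 : (0:ℝ) ≤ ∑ x ∈ t, (p x : C(X, ℝ)) y :=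
        Finset.sum_nonneg fun i _ => hpnn i y
      linarith
  obtain ⟨h, hhA, hh⟩ := hinv (G : C(X, ℝ)) G.2 hGpos
  have : G * ⟨h, hhA⟩ = 1 := by
    ext1
    exact hh
  have h1 : χ G * χ ⟨h, hhA⟩ = 1 := by
    rw [← map_mul, this, map_one]
  rw [hGχ, zero_mul] at h1
  exact zero_ne_one h1
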